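/- Let g : ℝ → ℝ be non-decreasing and define α := inf_{h>0} limsup_{t→∞} (g(t+h) − g(t))/h and β := sup_{h>0} liminf_{t→∞} (g(t+h) − g(t))/h. Then α ≥ limsup_{t→∞} g(t)/t ≥ liminf_{t→∞} g(t)/t ≥ β. -/
import Mathlib
open Filter

-- upper key lemma
lemma key_upper (g : ℝ → ℝ) (hg : Monotone g) (h : ℝ) (hh : 0 < h) :
    Filter.limsup (fun t : ℝ => ((g t / t : ℝ) : EReal)) Filter.atTop ≤
      Filter.limsup (fun t : ℝ => (((g (t + h) - g t) / h : ℝ) : EReal)) Filter.atTop := by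
  set L := Filter.limsup (fun t : ℝ => (((g (t + h) - g t) / h : ℝ) : EReal)) Filter.atTop with hL
  have hL0 : (0 : EReal) ≤ L := by
    refine le_limsup_of_frequently_le ?_ (by isBoundedDefault)
    apply Filter.Eventually.frequently
    apply Filter.Eventually.of_forall
    intro t
    have : (0:ℝ) ≤ (g (t + h) - g t) / h :=
      div_nonneg (sub_nonneg.2 (hg (by linarith))) hh.le
    exact_mod_cast this
  apply le_of_forall_gt_imp_ge_of_dense
  intro x hx
  obtain ⟨c, hc1, hc2⟩ := EReal.exists_between_coe_real hx
  have hc0 : (0:ℝ) < c := by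
    have := lt_of_le_of_lt hL0 hc1
    exact_mod_cast this
  -- eventually g (t+h) ≤ g t + c*h
  have hev : ∀ᶠ t : ℝ in atTop, g (t + h) ≤ g t + c * h := by
    filter_upwards [eventually_lt_of_limsup_lt hc1] with t ht
    have ht' : (g (t + h) - g t) / h < c := by exact_mod_cast ht
    nlinarith [(div_lt_iff₀ hh).1 ht']
  obtain ⟨T, hT⟩ := eventually_atTop.1 hev
  -- induction bound
  have hstep : ∀ n : ℕ, g (T + n * h) ≤ g T + n * (c * h) := by
    intro n
    induction n with
    | zero => simp
    | succ n ih =>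
      have : T + (n+1 : ℕ) * h = (T + n * h) + h := by push_cast; ring
      rw [this]
      have := hT (T + n * h) (by nlinarith [Nat.cast_nonneg (α := ℝ) n])
      push_cast
      nlinarith
  -- bound for all t ≥ T
  have hbound : ∀ t : ℝ, T ≤ t → g t ≤ g T + c * (t - T) + c * h := by
    intro t ht
    set n : ℕ := ⌈(t - T) / h⌉₊ with hn
    have h1 : (t - T) / h ≤ n := Nat.le_ceil _
    have h2 : (n : ℝ) < (t - T) / h + 1 := Nat.ceil_lt_add_one (div_nonneg (by linarith) hh.le)
    have ht' : t ≤ T + n * h := by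
      have := (div_le_iff₀ hh).1 h1; linarith
    calc g t ≤ g (T + n * h) := hg ht'
      _ ≤ g T + n * (c * h) := hstep n
      _ ≤ g T + c * (t - T) + c * h := by
          have h3 : (t - T) / h * h = t - T := div_mul_cancel₀ _ hh.ne'
          nlinarith [mul_lt_mul_of_pos_right h2 (mul_pos hc0 hh)]
  -- compare with φ t = K / t + c
  set K : ℝ := g T + c * h - c * T with hK
  have hev2 : ∀ᶠ t : ℝ in atTop, ((g t / t : ℝ) : EReal) ≤ ((K / t + c : ℝ) : EReal) := by
    filter_upwards [eventually_ge_atTop (max T 1)] with t ht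
    have ht1 : (1:ℝ) ≤ t := le_trans (le_max_right _ _) ht
    have htT : T ≤ t := le_trans (le_max_left _ _) ht
    have ht0 : (0:ℝ) < t := by linarith
    have : g t / t ≤ K / t + c := by
      rw [div_add' _ _ _ ht0.ne', div_le_div_iff₀ ht0 ht0]
      have := hbound t htT
      nlinarith
    exact_mod_cast this
  have hlim : Filter.limsup (fun t : ℝ => ((K / t + c : ℝ) : EReal)) atTop = (c : EReal) := by
    apply Filter.Tendsto.limsup_eq
    rw [EReal.tendsto_coe]
    have : Filter.Tendsto (fun t : ℝ => K / t + c) atTop (nhds (0 + c)) := by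
      apply Filter.Tendsto.add_const
      exact tendsto_const_nhds.div_atTop tendsto_id
    simpa using this
  calc Filter.limsup (fun t : ℝ => ((g t / t : ℝ) : EReal)) atTop
      ≤ Filter.limsup (fun t : ℝ => ((K / t + c : ℝ) : EReal)) atTop :=
        Filter.limsup_le_limsup hev2
    _ = (c : EReal) := hlim
    _ ≤ x := hc2.le

lemma key_lower (g : ℝ → ℝ) (hg : Monotone g) (h : ℝ) (hh : 0 < h) :
    Filter.liminf (fun t : ℝ => (((g (t + h) - g t) / h : ℝ) : EReal)) Filter.atTop ≤
      Filter.liminf (fun t : ℝ => ((g t / t : ℝ) : EReal)) Filter.atTop := by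
  set I := Filter.liminf (fun t : ℝ => ((g t / t : ℝ) : EReal)) Filter.atTop with hI
  -- liminf g t / t ≥ 0
  have hnn : (0 : EReal) ≤ I := by
    have hcmp : ∀ᶠ t : ℝ in atTop, ((g 0 / t : ℝ) : EReal) ≤ ((g t / t : ℝ) : EReal) := by
      filter_upwards [eventually_ge_atTop (1:ℝ)] with t ht
      have ht0 : (0:ℝ) < t := by linarith
      have : g 0 / t ≤ g t / t := by gcongr; exact hg ht0.le
      exact_mod_cast this
    have hlim0 : Filter.liminf (fun t : ℝ => ((g 0 / t : ℝ) : EReal)) atTop = (0 : EReal) := by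
      apply Filter.Tendsto.liminf_eq
      rw [show ((0:EReal)) = ((0:ℝ):EReal) by simp, EReal.tendsto_coe]
      exact tendsto_const_nhds.div_atTop tendsto_id
    calc (0:EReal) = Filter.liminf (fun t : ℝ => ((g 0 / t : ℝ) : EReal)) atTop := hlim0.symm
      _ ≤ I := Filter.liminf_le_liminf hcmp
  apply le_of_forall_lt_imp_le_of_dense
  intro x hx
  obtain ⟨c, hc1, hc2⟩ := EReal.exists_between_coe_real hx
  rcases le_or_gt c 0 with hc0 | hc0
  · calc x ≤ (c : EReal) := hc1.le
      _ ≤ (0 : EReal) := by exact_mod_cast hc0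
      _ ≤ I := hnn
  -- main case c > 0
  have hev : ∀ᶠ t : ℝ in atTop, g t + c * h ≤ g (t + h) := by
    filter_upwards [eventually_lt_of_lt_liminf hc2] with t ht
    have ht' : c < (g (t + h) - g t) / h := by exact_mod_cast ht
    nlinarith [(lt_div_iff₀ hh).1 ht']
  obtain ⟨T, hT⟩ := eventually_atTop.1 hev
  have hstep : ∀ n : ℕ, g T + n * (c * h) ≤ g (T + n * h) := by
    intro n
    induction n with
    | zero => simp
    | succ n ih =>
      have heq : T + (n+1 : ℕ) * h = (T + n * h) + h := by push_cast; ring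
      rw [heq]
      have := hT (T + n * h) (by nlinarith [Nat.cast_nonneg (α := ℝ) n])
      push_cast
      nlinarith
  have hbound : ∀ t : ℝ, T ≤ t → g T + c * (t - T) - c * h ≤ g t := by
    intro t ht
    set n : ℕ := ⌊(t - T) / h⌋₊ with hn
    have h1 : (n : ℝ) ≤ (t - T) / h := Nat.floor_le (div_nonneg (by linarith) hh.le)
    have h2 : (t - T) / h - 1 < (n : ℝ) := by
      have := Nat.lt_floor_add_one ((t - T) / h); linarith
    have ht' : T + n * h ≤ t := by
      have := (div_le_iff₀ hh).1 (le_refl ((t-T)/h))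
      have h3 : (t - T) / h * h = t - T := div_mul_cancel₀ _ hh.ne'
      nlinarith
    calc g T + c * (t - T) - c * h
        ≤ g T + n * (c * h) := by
          have h3 : (t - T) / h * h = t - T := div_mul_cancel₀ _ hh.ne'
          nlinarith [mul_lt_mul_of_pos_right h2 (mul_pos hc0 hh)]
      _ ≤ g (T + n * h) := hstep n
      _ ≤ g t := hg ht'
  set K : ℝ := g T - c * h - c * T with hK
  have hev2 : ∀ᶠ t : ℝ in atTop, ((K / t + c : ℝ) : EReal) ≤ ((g t / t : ℝ) : EReal) := by
    filter_upwards [eventually_ge_atTop (max T 1)] with t ht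
    have ht1 : (1:ℝ) ≤ t := le_trans (le_max_right _ _) ht
    have htT : T ≤ t := le_trans (le_max_left _ _) ht
    have ht0 : (0:ℝ) < t := by linarith
    have : K / t + c ≤ g t / t := by
      rw [div_add' _ _ _ ht0.ne', div_le_div_iff₀ ht0 ht0]
      have := hbound t htT
      nlinarith
    exact_mod_cast this
  have hlim : Filter.liminf (fun t : ℝ => ((K / t + c : ℝ) : EReal)) atTop = (c : EReal) := by
    apply Filter.Tendsto.liminf_eq
    rw [EReal.tendsto_coe]
    have : Filter.Tendsto (fun t : ℝ => K / t + c) atTop (nhds (0 + c)) := by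
      apply Filter.Tendsto.add_const
      exact tendsto_const_nhds.div_atTop tendsto_id
    simpa using this
  calc x ≤ (c : EReal) := hc1.le
    _ = Filter.liminf (fun t : ℝ => ((K / t + c : ℝ) : EReal)) atTop := hlim.symm
    _ ≤ I := Filter.liminf_le_liminf hev2

theorem stmt_6 (g : ℝ → ℝ) (hg : Monotone g)
    (α β : EReal)
    (hα : α = ⨅ h : {h : ℝ // 0 < h},
      Filter.limsup (fun t : ℝ => (((g (t + h.1) - g t) / h.1 : ℝ) : EReal)) Filter.atTop)
    (hβ : β = ⨆ h : {h : ℝ // 0 < h},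
      Filter.liminf (fun t : ℝ => (((g (t + h.1) - g t) / h.1 : ℝ) : EReal)) Filter.atTop) :
    Filter.limsup (fun t : ℝ => ((g t / t : ℝ) : EReal)) Filter.atTop ≤ α ∧
    Filter.liminf (fun t : ℝ => ((g t / t : ℝ) : EReal)) Filter.atTop ≤
      Filter.limsup (fun t : ℝ => ((g t / t : ℝ) : EReal)) Filter.atTop ∧
    β ≤ Filter.liminf (fun t : ℝ => ((g t / t : ℝ) : EReal)) Filter.atTop := by
  refine ⟨?_, Filter.liminf_le_limsup, ?_⟩
  · rw [hα]
    exact le_iInf fun h => key_upper g hg h.1 h.2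
  · rw [hβ]
    exact iSup_le fun h => key_lower g hg h.1 h.2
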